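/- Let L be a solvable Leibniz A-algebra and let B, D be ideals of L. Then B ⊆ Z_L(D) if and only if B ∩ D ⊆ Z(B) ∩ Z(D). -/

import Mathlib

/-- A (right) Leibniz algebra structure on an `F`-vector space `L`:
a bilinear bracket satisfying `[x,[y,z]] = [[x,y],z] - [[x,z],y]`. -/
structure LeibnizAlg (F : Type*) (L : Type*) [Field F] [AddCommGroup L] [Module F L] where
  bracket : L →ₗ[F] L →ₗ[F] L
  leibniz : ∀ x y z : L,
    bracket x (bracket y z) = bracket (bracket x y) z - bracket (bracket x z) y

namespace LeibnizAlg

variable {F : Type*} {L : Type*} [Field F] [AddCommGroup L] [Module F L]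

/-- The product `[M, N]` of two subspaces: the span of all brackets `[m, n]`. -/
def prod (A : LeibnizAlg F L) (M N : Submodule F L) : Submodule F L :=
  Submodule.span F {z : L | ∃ m ∈ M, ∃ n ∈ N, z = A.bracket m n}

/-- A subalgebra: a subspace closed under the product. -/
def IsSubalgebra (A : LeibnizAlg F L) (S : Submodule F L) : Prop :=
  A.prod S S ≤ S

/-- A (two-sided) ideal: `[I, L] ⊆ I` and `[L, I] ⊆ I`. -/
def IsIdeal (A : LeibnizAlg F L) (I : Submodule F L) : Prop :=
  A.prod I ⊤ ≤ I ∧ A.prod ⊤ I ≤ I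

/-- Lower central series of a subspace `U`: `lcs U 0 = U = U¹`,
`lcs U k = U^(k+1)`, i.e. `lcs U (k+1) = [lcs U k, U]`. -/
def lcs (A : LeibnizAlg F L) (U : Submodule F L) : ℕ → Submodule F L
  | 0 => U
  | k + 1 => A.prod (lcs A U k) U

/-- `U` is nilpotent: `U^(n+1) = 0` for some `n`. -/
def IsNilpotentSub (A : LeibnizAlg F L) (U : Submodule F L) : Prop :=
  ∃ n : ℕ, A.lcs U n = ⊥

/-- `U` is abelian: `[U, U] = 0`. -/
def IsAbelian (A : LeibnizAlg F L) (U : Submodule F L) : Prop :=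
  A.prod U U = ⊥

/-- An `A`-algebra: every nilpotent subalgebra is abelian. -/
def IsAAlgebra (A : LeibnizAlg F L) : Prop :=
  ∀ U : Submodule F L, A.IsSubalgebra U → A.IsNilpotentSub U → A.IsAbelian U

/-- Derived series: `derSeries 0 = L`, `derSeries (k+1) = [derSeries k, derSeries k]`. -/
def derSeries (A : LeibnizAlg F L) : ℕ → Submodule F L
  | 0 => ⊤
  | k + 1 => A.prod (derSeries A k) (derSeries A k)

/-- `L` is solvable: some term of the derived series vanishes. -/
def IsSolvable (A : LeibnizAlg F L) : Prop :=
  ∃ n : ℕ, A.derSeries n = ⊥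

/-- The centralizer `Z_L(U)` of a subspace `U`. -/
def centralizer (A : LeibnizAlg F L) (U : Submodule F L) : Submodule F L where
  carrier := {x : L | ∀ u ∈ U, A.bracket x u = 0 ∧ A.bracket u x = 0}
  add_mem' := by
    intro a b ha hb u hu
    refine ⟨?_, ?_⟩
    · rw [map_add, LinearMap.add_apply, (ha u hu).1, (hb u hu).1, add_zero]
    · rw [map_add, (ha u hu).2, (hb u hu).2, add_zero]
  zero_mem' := by
    intro u hu
    refine ⟨?_, ?_⟩
    · rw [map_zero, LinearMap.zero_apply]
    · rw [map_zero]
  smul_mem' := by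
    intro c a ha u hu
    refine ⟨?_, ?_⟩
    · rw [map_smul, LinearMap.smul_apply, (ha u hu).1, smul_zero]
    · rw [map_smul, (ha u hu).2, smul_zero]

/-- The centre of the subalgebra `M`: elements of `M` centralizing `M`. -/
def centerOf (A : LeibnizAlg F L) (M : Submodule F L) : Submodule F L :=
  M ⊓ A.centralizer M

/-- `N` is the nilradical: the largest nilpotent ideal. -/
def IsNilradical (A : LeibnizAlg F L) (N : Submodule F L) : Prop :=
  A.IsIdeal N ∧ A.IsNilpotentSub N ∧
    ∀ I : Submodule F L, A.IsIdeal I → A.IsNilpotentSub I → I ≤ N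

/-- A minimal ideal: a nonzero ideal containing no ideal other than `0` and itself. -/
def IsMinimalIdeal (A : LeibnizAlg F L) (I : Submodule F L) : Prop :=
  A.IsIdeal I ∧ I ≠ ⊥ ∧ ∀ J : Submodule F L, A.IsIdeal J → J ≤ I → J = ⊥ ∨ J = I

/-- A maximal subalgebra. -/
def IsMaximalSubalgebra (A : LeibnizAlg F L) (M : Submodule F L) : Prop :=
  A.IsSubalgebra M ∧ M ≠ ⊤ ∧
    ∀ S : Submodule F L, A.IsSubalgebra S → M ≤ S → S = M ∨ S = ⊤

/-- `L` is φ-free: every ideal contained in all maximal subalgebras is zero. -/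
def IsPhiFree (A : LeibnizAlg F L) : Prop :=
  ∀ I : Submodule F L, A.IsIdeal I →
    (∀ M : Submodule F L, A.IsMaximalSubalgebra M → I ≤ M) → I = ⊥

/-- `Asoc L`: the sum of the abelian minimal ideals. -/
def asoc (A : LeibnizAlg F L) : Submodule F L :=
  sSup {I : Submodule F L | A.IsMinimalIdeal I ∧ A.IsAbelian I}

/-- A Cartan subalgebra: a nilpotent, self-normalizing subalgebra. -/
def IsCartan (A : LeibnizAlg F L) (C : Submodule F L) : Prop :=
  A.IsSubalgebra C ∧ A.IsNilpotentSub C ∧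
    ∀ x : L, (∀ c ∈ C, A.bracket x c ∈ C ∧ A.bracket c x ∈ C) → x ∈ C

/-- A maximal nilpotent subalgebra. -/
def IsMaxNilpotentSubalgebra (A : LeibnizAlg F L) (U : Submodule F L) : Prop :=
  A.IsSubalgebra U ∧ A.IsNilpotentSub U ∧
    ∀ V : Submodule F L, A.IsSubalgebra V → A.IsNilpotentSub V → U ≤ V → V = U

end LeibnizAlg


namespace LeibnizAlg

section Aux

variable {F : Type*} {L : Type*} [Field F] [AddCommGroup L] [Module F L]
variable (A : LeibnizAlg F L)

lemma mem_prod {M N : Submodule F L} {m n : L} (hm : m ∈ M) (hn : n ∈ N) :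
    A.bracket m n ∈ A.prod M N :=
  Submodule.subset_span ⟨m, hm, n, hn, rfl⟩

lemma prod_le {M N P : Submodule F L} (h : ∀ m ∈ M, ∀ n ∈ N, A.bracket m n ∈ P) :
    A.prod M N ≤ P := by
  apply Submodule.span_le.2
  rintro z ⟨m, hm, n, hn, rfl⟩
  exact h m hm n hn

lemma prod_mono {M M' N N' : Submodule F L} (h1 : M ≤ M') (h2 : N ≤ N') :
    A.prod M N ≤ A.prod M' N' :=
  A.prod_le fun m hm n hn => A.mem_prod (h1 hm) (h2 hn)

lemma bracket_eq_zero {M N : Submodule F L} (h : A.prod M N = ⊥) {m n : L}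
    (hm : m ∈ M) (hn : n ∈ N) : A.bracket m n = 0 := by
  have := A.mem_prod hm hn
  rwa [h, Submodule.mem_bot] at this

lemma prod_bot_left (N : Submodule F L) : A.prod ⊥ N = ⊥ := by
  refine le_bot_iff.1 (A.prod_le ?_)
  intro m hm n _
  rw [Submodule.mem_bot] at hm ⊢
  simp [hm]

lemma prod_bot_right (M : Submodule F L) : A.prod M ⊥ = ⊥ := by
  refine le_bot_iff.1 (A.prod_le ?_)
  intro m _ n hn
  rw [Submodule.mem_bot] at hn ⊢
  simp [hn]

lemma prod_span_span {S S' : Set L} {P : Submodule F L}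
    (h : ∀ a ∈ S, ∀ b ∈ S', A.bracket a b ∈ P) :
    A.prod (Submodule.span F S) (Submodule.span F S') ≤ P := by
  have haux : ∀ a ∈ S, ∀ n ∈ Submodule.span F S', A.bracket a n ∈ P := by
    intro a ha n hn
    induction hn using Submodule.span_induction with
    | mem b hb => exact h a ha b hb
    | zero => simp
    | add x y _ _ ihx ihy => rw [map_add]; exact P.add_mem ihx ihy
    | smul c x _ ih => rw [map_smul]; exact P.smul_mem c ih
  apply A.prod_le
  intro m hm n hn
  induction hm using Submodule.span_induction with
  | mem a ha => exact haux a ha n hn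
  | zero => simp
  | add x y _ _ ihx ihy =>
      rw [map_add, LinearMap.add_apply]; exact P.add_mem ihx ihy
  | smul c x _ ih =>
      rw [map_smul, LinearMap.smul_apply]; exact P.smul_mem c ih

lemma mem_centralizer_iff {U : Submodule F L} {x : L} :
    x ∈ A.centralizer U ↔ ∀ u ∈ U, A.bracket x u = 0 ∧ A.bracket u x = 0 :=
  Iff.rfl

lemma centralizer_inf_le {M N : Submodule F L} :
    A.centralizer M ⊓ A.centralizer N ≤ A.centralizer (M ⊔ N) := by
  intro x hx
  obtain ⟨h1, h2⟩ := Submodule.mem_inf.1 hx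
  rw [mem_centralizer_iff]
  intro u hu
  obtain ⟨y, hy, z, hz, rfl⟩ := Submodule.mem_sup.1 hu
  constructor
  · rw [map_add, (h1 y hy).1, (h2 z hz).1, add_zero]
  · rw [map_add, LinearMap.add_apply, (h1 y hy).2, (h2 z hz).2, add_zero]

end Aux

/-- Iterated right powers: `pw g 0 = g`, `pw g (k+1) = [pw g k, g]`. -/
def pw {F : Type*} {L : Type*} [Field F] [AddCommGroup L] [Module F L]
    (A : LeibnizAlg F L) (g : L) : ℕ → L
  | 0 => g
  | k + 1 => A.bracket (pw A g k) g

section Pw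

variable {F : Type*} {L : Type*} [Field F] [AddCommGroup L] [Module F L]
variable (A : LeibnizAlg F L)

@[simp] lemma pw_zero (g : L) : A.pw g 0 = g := rfl

lemma pw_succ (g : L) (k : ℕ) : A.pw g (k + 1) = A.bracket (A.pw g k) g := rfl

/-- Right powers beyond the first are right-central: `[x, g^{[k]}] = 0` for `k ≥ 2`. -/
lemma bracket_pw_succ_eq_zero (g : L) : ∀ (k : ℕ) (x : L), A.bracket x (A.pw g (k + 1)) = 0 := by
  intro k
  induction k with
  | zero =>
      intro x
      rw [pw_succ, pw_zero, A.leibniz]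
      exact sub_self _
  | succ k ih =>
      intro x
      rw [pw_succ, A.leibniz, ih x, ih (A.bracket x g)]
      simp

lemma bracket_span_pw_eq_zero {g c : L}
    (hc : c ∈ Submodule.span F (Set.range fun k => A.pw g (k + 1))) (x : L) :
    A.bracket x c = 0 := by
  induction hc using Submodule.span_induction with
  | mem b hb => obtain ⟨k, rfl⟩ := hb; exact A.bracket_pw_succ_eq_zero g k x
  | zero => simp
  | add y z _ _ ihy ihz => rw [map_add, ihy, ihz, add_zero]
  | smul c' y _ ih => rw [map_smul, ih, smul_zero]

lemma pw_mem {G : Submodule F L} (hG : A.IsSubalgebra G) {g : L} (hg : g ∈ G) :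
    ∀ k, A.pw g k ∈ G := by
  intro k
  induction k with
  | zero => exact hg
  | succ k ih => exact hG (A.mem_prod ih hg)

end Pw

section Fitting

/-- Range-stabilization form of the Fitting lemma. -/
lemma fitting_aux {F V : Type*} [Field F] [AddCommGroup V] [Module F V] [FiniteDimensional F V]
    (f : Module.End F V) (a : V) : ∃ (c : V) (m : ℕ), (f ^ m) (a + f c) = 0 := by
  set S : Set ℕ := Set.range fun k => Module.finrank F (LinearMap.range (f ^ k)) with hS
  have hne : S.Nonempty := ⟨_, ⟨0, rfl⟩⟩
  obtain ⟨m, hm⟩ : ∃ m, Module.finrank F (LinearMap.range (f ^ m)) = sInf S := Nat.sInf_mem hne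
  have hle : LinearMap.range (f ^ (m + 1)) ≤ LinearMap.range (f ^ m) := by
    rw [pow_succ, Module.End.mul_eq_comp]
    exact LinearMap.range_comp_le_range _ _
  have hrk : Module.finrank F (LinearMap.range (f ^ m))
      ≤ Module.finrank F (LinearMap.range (f ^ (m + 1))) := by
    rw [hm]; exact Nat.sInf_le ⟨m + 1, rfl⟩
  have heq : LinearMap.range (f ^ (m + 1)) = LinearMap.range (f ^ m) :=
    Submodule.eq_of_le_of_finrank_le hle hrk
  have hprop : ∀ j, LinearMap.range (f ^ (j + m)) = LinearMap.range (f ^ m) := by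
    intro j
    induction j with
    | zero => rw [Nat.zero_add]
    | succ j ih =>
        have h1 : j + 1 + m = j + (m + 1) := by omega
        rw [h1, pow_add, Module.End.mul_eq_comp, LinearMap.range_comp, heq,
          ← LinearMap.range_comp, ← Module.End.mul_eq_comp, ← pow_add, ih]
  have hmem : (f ^ m) a ∈ LinearMap.range (f ^ (m + 1 + m)) := by
    rw [hprop (m + 1)]; exact LinearMap.mem_range_self _ a
  obtain ⟨c', hc'⟩ := hmem
  refine ⟨-((f ^ m) c'), m, ?_⟩
  have hcomp : (f ^ (m + 1 + m)) c' = (f ^ m) (f ((f ^ m) c')) := by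
    have : m + 1 + m = m + (1 + m) := by omega
    rw [this, pow_add, pow_add, pow_one]
    simp [Module.End.mul_apply]
  rw [map_add, map_neg, map_neg, ← hcomp, hc']
  exact add_neg_cancel _

variable {F : Type*} {L : Type*} [Field F] [AddCommGroup L] [Module F L]
variable (A : LeibnizAlg F L)

/-- Every element can be corrected, inside the span of its higher right powers,
to a right-nilpotent element. -/
lemma exists_right_nilpotent [FiniteDimensional F L] (g : L) :
    ∃ c ∈ Submodule.span F (Set.range fun k => A.pw g (k + 1)),
      ∃ m, ∀ j, A.pw (g + c) (m + 1 + j) = 0 := by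
  set Ig := Submodule.span F (Set.range fun k => A.pw g (k + 1)) with hIg
  set ρ : Module.End F L := A.bracket.flip g with hρ
  have hρap : ∀ x : L, ρ x = A.bracket x g := fun x => rfl
  have hmaps : ∀ x ∈ Ig, ρ x ∈ Ig := by
    intro x hx
    refine (Submodule.span_le.2 ?_ : Ig ≤ Ig.comap ρ) hx
    rintro z ⟨k, rfl⟩
    simp only [Submodule.mem_comap]
    show ρ (A.pw g (k + 1)) ∈ Ig
    rw [hρap, ← A.pw_succ]
    exact Submodule.subset_span ⟨k + 1, rfl⟩
  set fres := ρ.restrict hmaps with hfres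
  have ha : A.pw g 1 ∈ Ig := Submodule.subset_span ⟨0, rfl⟩
  obtain ⟨cI, m, hcm⟩ := fitting_aux fres (⟨A.pw g 1, ha⟩ : Ig)
  refine ⟨(cI : L), cI.2, m, ?_⟩
  have hcoe : ∀ (n : ℕ) (x : Ig), ((fres ^ n) x : L) = (ρ ^ n) (x : L) := by
    intro n
    induction n with
    | zero => intro x; simp
    | succ n ih =>
        intro x
        rw [pow_succ', pow_succ', Module.End.mul_apply, Module.End.mul_apply, ← ih x]
        exact LinearMap.restrict_coe_apply _ _ _
  have h0 : (ρ ^ m) (A.pw g 1 + ρ (cI : L)) = 0 := by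
    have h1 := congrArg (Subtype.val) hcm
    rw [hcoe] at h1
    simpa [hfres, LinearMap.restrict_coe_apply] using h1
  have hbc : ∀ x : L, A.bracket x (cI : L) = 0 := A.bracket_span_pw_eq_zero cI.2
  set v := g + (cI : L) with hv
  have hpv1 : A.pw v 1 = A.pw g 1 + ρ (cI : L) := by
    rw [pw_succ, pw_zero, hv]
    simp only [map_add, LinearMap.add_apply, hbc, add_zero]
    rfl
  have hpvk : ∀ k, A.pw v (k + 1) = (ρ ^ k) (A.pw v 1) := by
    intro k
    induction k with
    | zero => simp
    | succ k ih =>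
        rw [pw_succ, ih, hv]
        simp only [map_add, hbc, add_zero]
        rw [← hρap, pow_succ', Module.End.mul_apply]
  have hzero : A.pw v (m + 1) = 0 := by rw [hpvk m, hpv1, h0]
  intro j
  induction j with
  | zero => exact hzero
  | succ j ih =>
      have h2 : m + 1 + (j + 1) = (m + 1 + j) + 1 := rfl
      rw [h2, pw_succ, ih, map_zero, LinearMap.zero_apply]

end Fitting

section Core

variable {F : Type*} {L : Type*} [Field F] [AddCommGroup L] [Module F L]
variable (A : LeibnizAlg F L)

lemma core [FiniteDimensional F L] (hA : A.IsAAlgebra)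
    {G H U : Submodule F L} (hG : A.IsSubalgebra G) (hH : A.IsSubalgebra H)
    (hGU : G ≤ U) (hHU : H ≤ U)
    (h1 : A.prod (A.prod G G) H = ⊥)
    (h3 : A.prod (A.prod H H) G = ⊥)
    (hc : A.prod G H ⊔ A.prod H G ≤ U ⊓ A.centralizer U) :
    A.prod G H = ⊥ ∧ A.prod H G = ⊥ := by
  suffices key : ∀ g ∈ G, ∀ h ∈ H, A.bracket g h = 0 ∧ A.bracket h g = 0 by
    constructor
    · refine le_bot_iff.1 (A.prod_le ?_)
      intro m hm n hn
      rw [(key m hm n hn).1]; exact Submodule.zero_mem ⊥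
    · refine le_bot_iff.1 (A.prod_le ?_)
      intro m hm n hn
      rw [(key n hn m hm).2]; exact Submodule.zero_mem ⊥
  intro g hg h hh
  obtain ⟨c, hcIg, mc, hcz⟩ := A.exists_right_nilpotent g
  obtain ⟨e, heIh, me, hez⟩ := A.exists_right_nilpotent h
  have hbc : ∀ x : L, A.bracket x c = 0 := A.bracket_span_pw_eq_zero hcIg
  have hbe : ∀ x : L, A.bracket x e = 0 := A.bracket_span_pw_eq_zero heIh
  have hIgG : Submodule.span F (Set.range fun k => A.pw g (k + 1)) ≤ A.prod G G := by
    rw [Submodule.span_le]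
    rintro z ⟨k, rfl⟩
    exact A.mem_prod (A.pw_mem hG hg k) hg
  have hIhH : Submodule.span F (Set.range fun k => A.pw h (k + 1)) ≤ A.prod H H := by
    rw [Submodule.span_le]
    rintro z ⟨k, rfl⟩
    exact A.mem_prod (A.pw_mem hH hh k) hh
  have hcGG : c ∈ A.prod G G := hIgG hcIg
  have heHH : e ∈ A.prod H H := hIhH heIh
  set v := g + c with hvdef
  set w := h + e with hwdef
  have hvG : v ∈ G := G.add_mem hg (hG hcGG)
  have hwH : w ∈ H := H.add_mem hh (hH heHH)
  have hpvG : ∀ k, A.pw v k ∈ G := A.pw_mem hG hvG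
  have hpwH : ∀ k, A.pw w k ∈ H := A.pw_mem hH hwH
  have hpv_prod : ∀ k, A.pw v (k + 1) ∈ A.prod G G := fun k => A.mem_prod (hpvG k) hvG
  have hpw_prod : ∀ k, A.pw w (k + 1) ∈ A.prod H H := fun k => A.mem_prod (hpwH k) hwH
  set s := A.bracket g h with hsdef
  set s' := A.bracket h g with hs'def
  have hsmem : s ∈ U ⊓ A.centralizer U := hc (Submodule.mem_sup_left (A.mem_prod hg hh))
  have hs'mem : s' ∈ U ⊓ A.centralizer U := hc (Submodule.mem_sup_right (A.mem_prod hh hg))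
  have hsU : s ∈ U := (Submodule.mem_inf.1 hsmem).1
  have hsC : s ∈ A.centralizer U := (Submodule.mem_inf.1 hsmem).2
  have hs'U : s' ∈ U := (Submodule.mem_inf.1 hs'mem).1
  have hs'C : s' ∈ A.centralizer U := (Submodule.mem_inf.1 hs'mem).2
  have hvw : A.bracket v w = s := by
    rw [hvdef, hwdef]
    simp only [map_add, LinearMap.add_apply, hbe, add_zero]
    rw [A.bracket_eq_zero h1 hcGG hh, add_zero, hsdef]
  have hwv : A.bracket w v = s' := by
    rw [hvdef, hwdef]
    simp only [map_add, LinearMap.add_apply, hbc, add_zero]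
    rw [A.bracket_eq_zero h3 heHH hg, add_zero, hs'def]
  -- the test subalgebra
  set ST : Set L := ((Set.range fun k => A.pw v k) ∪ (Set.range fun k => A.pw w k)) ∪ {s, s'}
    with hSTdef
  set T := Submodule.span F ST with hTdef
  have hSTU : ∀ t ∈ ST, t ∈ U := by
    rintro t ((⟨k, rfl⟩ | ⟨k, rfl⟩) | ht)
    · exact hGU (hpvG k)
    · exact hHU (hpwH k)
    · rcases ht with rfl | rfl
      · exact hsU
      · exact hs'U
  have hvT : v ∈ T := Submodule.subset_span (Or.inl (Or.inl ⟨0, rfl⟩))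
  have hwT : w ∈ T := Submodule.subset_span (Or.inl (Or.inr ⟨0, rfl⟩))
  have hsT : s ∈ T := Submodule.subset_span (Or.inr (Or.inl rfl))
  have hs'T : s' ∈ T := Submodule.subset_span (Or.inr (Or.inr rfl))
  -- T is a subalgebra
  have hT : A.IsSubalgebra T := by
    show A.prod T T ≤ T
    refine A.prod_span_span ?_
    intro a ha b hb
    rcases ha with (ha | hass)
    swap
    · -- a ∈ {s, s'}
      rcases hass with rfl | rfl
      · rw [(hsC b (hSTU b hb)).1]; exact T.zero_mem
      · rw [(hs'C b (hSTU b hb)).1]; exact T.zero_mem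
    rcases hb with (hb | hbss)
    swap
    · -- b ∈ {s, s'}
      rcases hbss with rfl | rfl
      · rw [(hsC a (hSTU a (Or.inl ha))).2]; exact T.zero_mem
      · rw [(hs'C a (hSTU a (Or.inl ha))).2]; exact T.zero_mem
    rcases hb with ⟨j, rfl⟩ | ⟨j, rfl⟩
    · -- b = pw v j
      cases j with
      | succ j => rw [A.bracket_pw_succ_eq_zero v j a]; exact T.zero_mem
      | zero =>
          rcases ha with ⟨i, rfl⟩ | ⟨i, rfl⟩
          · exact Submodule.subset_span (Or.inl (Or.inl ⟨i + 1, rfl⟩))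
          · cases i with
            | zero =>
                show A.bracket w v ∈ T
                rw [hwv]; exact hs'T
            | succ i =>
                show A.bracket (A.pw w (i + 1)) v ∈ T
                rw [A.bracket_eq_zero h3 (hpw_prod i) hvG]; exact T.zero_mem
    · -- b = pw w j
      cases j with
      | succ j => rw [A.bracket_pw_succ_eq_zero w j a]; exact T.zero_mem
      | zero =>
          rcases ha with ⟨i, rfl⟩ | ⟨i, rfl⟩
          · cases i with
            | zero =>
                show A.bracket v w ∈ T
                rw [hvw]; exact hsT
            | succ i =>
                show A.bracket (A.pw v (i + 1)) w ∈ T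
                rw [A.bracket_eq_zero h1 (hpv_prod i) hwH]; exact T.zero_mem
          · exact Submodule.subset_span (Or.inl (Or.inr ⟨i + 1, rfl⟩))
  -- descending bounds for the lower central series of T
  have hstep : ∀ n : ℕ,
      A.prod (Submodule.span F
        (((Set.range fun k => A.pw v (k + n + 1)) ∪ (Set.range fun k => A.pw w (k + n + 1)))
          ∪ {s, s'})) T
      ≤ Submodule.span F
        ((Set.range fun k => A.pw v (k + (n + 1) + 1))
          ∪ (Set.range fun k => A.pw w (k + (n + 1) + 1))) := by
    intro n
    refine A.prod_span_span ?_
    intro a ha b hb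
    rcases ha with (ha | hass)
    swap
    · rcases hass with rfl | rfl
      · rw [(hsC b (hSTU b hb)).1]; exact Submodule.zero_mem _
      · rw [(hs'C b (hSTU b hb)).1]; exact Submodule.zero_mem _
    rcases ha with ⟨k, rfl⟩ | ⟨k, rfl⟩
    · -- a = pw v (k+n+1)
      rcases hb with (⟨j, rfl⟩ | ⟨j, rfl⟩) | hbss
      · cases j with
        | zero => exact Submodule.subset_span (Or.inl ⟨k, rfl⟩)
        | succ j => rw [A.bracket_pw_succ_eq_zero v j _]; exact Submodule.zero_mem _
      · cases j with
        | zero =>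
            show A.bracket (A.pw v (k + n + 1)) w ∈ _
            rw [A.bracket_eq_zero h1 (hpv_prod (k + n)) hwH]; exact Submodule.zero_mem _
        | succ j => rw [A.bracket_pw_succ_eq_zero w j _]; exact Submodule.zero_mem _
      · rcases hbss with rfl | rfl
        · rw [(hsC _ (hGU (hpvG (k + n + 1)))).2]; exact Submodule.zero_mem _
        · rw [(hs'C _ (hGU (hpvG (k + n + 1)))).2]; exact Submodule.zero_mem _
    · -- a = pw w (k+n+1)
      rcases hb with (⟨j, rfl⟩ | ⟨j, rfl⟩) | hbss
      · cases j with
        | zero =>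
            show A.bracket (A.pw w (k + n + 1)) v ∈ _
            rw [A.bracket_eq_zero h3 (hpw_prod (k + n)) hvG]; exact Submodule.zero_mem _
        | succ j => rw [A.bracket_pw_succ_eq_zero v j _]; exact Submodule.zero_mem _
      · cases j with
        | zero => exact Submodule.subset_span (Or.inr ⟨k, rfl⟩)
        | succ j => rw [A.bracket_pw_succ_eq_zero w j _]; exact Submodule.zero_mem _
      · rcases hbss with rfl | rfl
        · rw [(hsC _ (hHU (hpwH (k + n + 1)))).2]; exact Submodule.zero_mem _
        · rw [(hs'C _ (hHU (hpwH (k + n + 1)))).2]; exact Submodule.zero_mem _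
  have hchain : ∀ n : ℕ, A.lcs T (n + 1) ≤ Submodule.span F
      (((Set.range fun k => A.pw v (k + n + 1)) ∪ (Set.range fun k => A.pw w (k + n + 1)))
        ∪ {s, s'}) := by
    intro n
    induction n with
    | zero =>
        show A.prod (A.lcs T 0) T ≤ _
        show A.prod T T ≤ _
        refine A.prod_span_span ?_
        intro a ha b hb
        rcases ha with (ha | hass)
        swap
        · rcases hass with rfl | rfl
          · rw [(hsC b (hSTU b hb)).1]; exact Submodule.zero_mem _
          · rw [(hs'C b (hSTU b hb)).1]; exact Submodule.zero_mem _
        rcases ha with ⟨i, rfl⟩ | ⟨i, rfl⟩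
        · rcases hb with (⟨j, rfl⟩ | ⟨j, rfl⟩) | hbss
          · cases j with
            | zero => exact Submodule.subset_span (Or.inl (Or.inl ⟨i, rfl⟩))
            | succ j => rw [A.bracket_pw_succ_eq_zero v j _]; exact Submodule.zero_mem _
          · cases j with
            | zero =>
                cases i with
                | zero =>
                    show A.bracket v w ∈ _
                    rw [hvw]; exact Submodule.subset_span (Or.inr (Or.inl rfl))
                | succ i =>
                    show A.bracket (A.pw v (i + 1)) w ∈ _
                    rw [A.bracket_eq_zero h1 (hpv_prod i) hwH]; exact Submodule.zero_mem _
            | succ j => rw [A.bracket_pw_succ_eq_zero w j _]; exact Submodule.zero_mem _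
          · rcases hbss with rfl | rfl
            · rw [(hsC _ (hGU (hpvG i))).2]; exact Submodule.zero_mem _
            · rw [(hs'C _ (hGU (hpvG i))).2]; exact Submodule.zero_mem _
        · rcases hb with (⟨j, rfl⟩ | ⟨j, rfl⟩) | hbss
          · cases j with
            | zero =>
                cases i with
                | zero =>
                    show A.bracket w v ∈ _
                    rw [hwv]; exact Submodule.subset_span (Or.inr (Or.inr rfl))
                | succ i =>
                    show A.bracket (A.pw w (i + 1)) v ∈ _
                    rw [A.bracket_eq_zero h3 (hpw_prod i) hvG]; exact Submodule.zero_mem _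
            | succ j => rw [A.bracket_pw_succ_eq_zero v j _]; exact Submodule.zero_mem _
          · cases j with
            | zero => exact Submodule.subset_span (Or.inl (Or.inr ⟨i, rfl⟩))
            | succ j => rw [A.bracket_pw_succ_eq_zero w j _]; exact Submodule.zero_mem _
          · rcases hbss with rfl | rfl
            · rw [(hsC _ (hHU (hpwH i))).2]; exact Submodule.zero_mem _
            · rw [(hs'C _ (hHU (hpwH i))).2]; exact Submodule.zero_mem _
    | succ n ih =>
        show A.prod (A.lcs T (n + 1)) T ≤ _
        refine le_trans (A.prod_mono ih le_rfl) (le_trans (hstep n) ?_)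
        exact Submodule.span_mono Set.subset_union_left
  -- conclude nilpotency
  have hfin : A.lcs T (mc + me + 2) ≤ ⊥ := by
    have h4 : A.lcs T (mc + me + 2) = A.prod (A.lcs T (mc + me + 1)) T := rfl
    rw [h4]
    refine le_trans (A.prod_mono (hchain (mc + me)) le_rfl) (le_trans (hstep (mc + me)) ?_)
    rw [Submodule.span_le]
    rintro z (⟨k, rfl⟩ | ⟨k, rfl⟩)
    · rw [SetLike.mem_coe, Submodule.mem_bot]
      show A.pw v (k + (mc + me + 1) + 1) = 0
      have hidx : k + (mc + me + 1) + 1 = mc + 1 + (k + me + 1) := by omega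
      rw [hidx]
      exact hcz (k + me + 1)
    · rw [SetLike.mem_coe, Submodule.mem_bot]
      show A.pw w (k + (mc + me + 1) + 1) = 0
      have hidx : k + (mc + me + 1) + 1 = me + 1 + (k + mc + 1) := by omega
      rw [hidx]
      exact hez (k + mc + 1)
  have habT : A.IsAbelian T := hA T hT ⟨mc + me + 2, le_bot_iff.1 hfin⟩
  constructor
  · rw [← hvw]
    exact A.bracket_eq_zero habT hvT hwT
  · rw [← hwv]
    exact A.bracket_eq_zero habT hwT hvT

end Core

section Der

variable {F : Type*} {L : Type*} [Field F] [AddCommGroup L] [Module F L]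

def derOf (A : LeibnizAlg F L) (M : Submodule F L) : ℕ → Submodule F L
  | 0 => M
  | k + 1 => A.prod (derOf A M k) (derOf A M k)

variable (A : LeibnizAlg F L)

lemma derOf_props {M : Submodule F L} (hM : A.IsSubalgebra M) :
    ∀ k, A.IsSubalgebra (A.derOf M k) ∧ A.derOf M k ≤ M := by
  intro k
  induction k with
  | zero => exact ⟨hM, le_rfl⟩
  | succ k ih =>
      refine ⟨?_, le_trans ih.1 ih.2⟩
      exact A.prod_mono ih.1 ih.1
  -- note: IsSubalgebra (derOf M (k+1)) means prod (prod d d) (prod d d) ≤ prod d d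

lemma derOf_le_derSeries (M : Submodule F L) : ∀ k, A.derOf M k ≤ A.derSeries k := by
  intro k
  induction k with
  | zero => exact le_top
  | succ k ih => exact A.prod_mono ih ih

lemma derSeries_add_eq_bot {n : ℕ} (hn : A.derSeries n = ⊥) :
    ∀ j, A.derSeries (n + j) = ⊥ := by
  intro j
  induction j with
  | zero => exact hn
  | succ j ih =>
      have h4 : A.derSeries (n + j + 1) = A.prod (A.derSeries (n + j)) (A.derSeries (n + j)) := rfl
      rw [show n + (j + 1) = n + j + 1 from rfl, h4, ih, A.prod_bot_left]

end Der

end LeibnizAlg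

/-- Let `L` be a solvable Leibniz A-algebra and `B`, `D` ideals of `L`.
Then `B ⊆ Z_L(D)` if and only if `B ∩ D ⊆ Z(B) ∩ Z(D)`. -/
theorem ideal_centralizes_iff
    {F L : Type*} [Field F] [AddCommGroup L] [Module F L] [FiniteDimensional F L]
    (A : LeibnizAlg F L) (hA : A.IsAAlgebra) (hsolv : A.IsSolvable)
    (B D : Submodule F L) (hB : A.IsIdeal B) (hD : A.IsIdeal D) :
    B ≤ A.centralizer D ↔ B ⊓ D ≤ A.centerOf B ⊓ A.centerOf D := by
  constructor
  · intro hBC x hx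
    obtain ⟨hxB, hxD⟩ := Submodule.mem_inf.1 hx
    refine Submodule.mem_inf.2 ⟨Submodule.mem_inf.2 ⟨hxB, ?_⟩, Submodule.mem_inf.2 ⟨hxD, ?_⟩⟩
    · rw [LeibnizAlg.mem_centralizer_iff]
      intro u hu
      exact ⟨((hBC hu) x hxD).2, ((hBC hu) x hxD).1⟩
    · exact hBC hxB
  · intro hyp
    obtain ⟨n, hn⟩ := hsolv
    have hBsub : A.IsSubalgebra B := le_trans (A.prod_mono le_rfl le_top) hB.1
    have hDsub : A.IsSubalgebra D := le_trans (A.prod_mono le_rfl le_top) hD.1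
    have hKle : B ⊓ D ≤ (B ⊔ D) ⊓ A.centralizer (B ⊔ D) := by
      intro x hx
      have hx2 := hyp hx
      obtain ⟨hx3, hx4⟩ := Submodule.mem_inf.1 hx2
      obtain ⟨hxB, hxcB⟩ := Submodule.mem_inf.1 hx3
      obtain ⟨hxD, hxcD⟩ := Submodule.mem_inf.1 hx4
      exact Submodule.mem_inf.2 ⟨Submodule.mem_sup_left hxB,
        A.centralizer_inf_le (Submodule.mem_inf.2 ⟨hxcB, hxcD⟩)⟩
    have hBDle : A.prod B D ≤ (B ⊔ D) ⊓ A.centralizer (B ⊔ D) := by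
      refine le_trans (le_inf ?_ ?_) hKle
      · exact A.prod_le fun m hm n hn' => hB.1 (A.mem_prod hm Submodule.mem_top)
      · exact A.prod_le fun m hm n hn' => hD.2 (A.mem_prod Submodule.mem_top hn')
    have hDBle : A.prod D B ≤ (B ⊔ D) ⊓ A.centralizer (B ⊔ D) := by
      refine le_trans (le_inf ?_ ?_) hKle
      · exact A.prod_le fun m hm n hn' => hB.2 (A.mem_prod Submodule.mem_top hn')
      · exact A.prod_le fun m hm n hn' => hD.1 (A.mem_prod hm Submodule.mem_top)
    have claim : ∀ i k l, 2 * n ≤ k + l + i →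
        A.prod (A.derOf B k) (A.derOf D l) = ⊥ ∧ A.prod (A.derOf D l) (A.derOf B k) = ⊥ := by
      intro i
      induction i with
      | zero =>
          intro k l hkl
          have hnk : n ≤ k ∨ n ≤ l := by omega
          rcases hnk with hcase | hcase
          · have hbot : A.derOf B k = ⊥ := by
              refine le_bot_iff.1 (le_trans (A.derOf_le_derSeries B k) ?_)
              rw [show k = n + (k - n) by omega, A.derSeries_add_eq_bot hn]
            rw [hbot]
            exact ⟨A.prod_bot_left _, A.prod_bot_right _⟩
          · have hbot : A.derOf D l = ⊥ := by
              refine le_bot_iff.1 (le_trans (A.derOf_le_derSeries D l) ?_)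
              rw [show l = n + (l - n) by omega, A.derSeries_add_eq_bot hn]
            rw [hbot]
            exact ⟨A.prod_bot_right _, A.prod_bot_left _⟩
      | succ i ih =>
          intro k l hkl
          have h1 := (ih (k + 1) l (by omega)).1
          have h3 := (ih k (l + 1) (by omega)).2
          have hGB : A.derOf B k ≤ B := (A.derOf_props hBsub k).2
          have hHD : A.derOf D l ≤ D := (A.derOf_props hDsub l).2
          refine A.core hA (A.derOf_props hBsub k).1 (A.derOf_props hDsub l).1
            (le_trans hGB le_sup_left) (le_trans hHD le_sup_right) h1 h3 ?_
          refine sup_le ?_ ?_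
          · exact le_trans (A.prod_mono hGB hHD) hBDle
          · exact le_trans (A.prod_mono hHD hGB) hDBle
    have final := claim (2 * n) 0 0 (by omega)
    intro x hx
    rw [LeibnizAlg.mem_centralizer_iff]
    intro u hu
    exact ⟨A.bracket_eq_zero final.1 hx hu, A.bracket_eq_zero final.2 hu hx⟩
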